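/- arXiv:2411.15358 — 10 statements merged into one kernel-verified Lean document; each statement's English description precedes it below -/
import Mathlib

section
/- Let E = ℂ² with basis e₁, e₂, equipped with the dendriform algebra structure Dend₂¹ given by the bilinear operations ≺, ≻ : E × E → E determined on basis elements by e₁ ≺ e₁ = e₁ and e₁ ≻ e₂ = e₂ (all other products of basis elements are 0). A linear operator P : E → E is a Rota–Baxter operator of weight 0 on (E, ≺, ≻) if and only if there exists t ∈ ℂ such that P(e₁) = t·e₂ and P(e₂) = 0. -/
theorem stmt_0
    (l r : (ℂ × ℂ) →ₗ[ℂ] (ℂ × ℂ) →ₗ[ℂ] (ℂ × ℂ))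
    (P : (ℂ × ℂ) →ₗ[ℂ] (ℂ × ℂ))
    (e₁ e₂ : ℂ × ℂ)
    (he₁ : e₁ = (1, 0)) (he₂ : e₂ = (0, 1))
    (hl11 : l e₁ e₁ = e₁)
    (hl12 : l e₁ e₂ = 0)
    (hl21 : l e₂ e₁ = 0)
    (hl22 : l e₂ e₂ = 0)
    (hr11 : r e₁ e₁ = 0)
    (hr12 : r e₁ e₂ = e₂)
    (hr21 : r e₂ e₁ = 0)
    (hr22 : r e₂ e₂ = 0) :
    (∀ u v : ℂ × ℂ,
        l (P u) (P v) = P (l (P u) v + l u (P v) + (0:ℂ) • l u v) ∧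
        r (P u) (P v) = P (r (P u) v + r u (P v) + (0:ℂ) • l u v)) ↔
      (∃ t : ℂ, P e₁ = t • e₂ ∧ P e₂ = 0) := by
  have hx : ∀ x : ℂ × ℂ, x = x.1 • e₁ + x.2 • e₂ := by
    intro x; subst he₁ he₂; ext <;> simp
  -- helper: values of l, r on arbitrary second argument
  have hl2w : ∀ w : ℂ × ℂ, l e₂ w = 0 := by
    intro w; conv_lhs => rw [hx w]
    simp [map_add, map_smul, hl21, hl22]
  have hlw2 : ∀ w : ℂ × ℂ, l w e₂ = 0 := by
    intro w; conv_lhs => rw [hx w]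
    simp [map_add, map_smul, hl12, hl22]
  have hr2w : ∀ w : ℂ × ℂ, r e₂ w = 0 := by
    intro w; conv_lhs => rw [hx w]
    simp [map_add, map_smul, hr21, hr22]
  have hrw2 : ∀ w : ℂ × ℂ, r w e₂ = w.1 • e₂ := by
    intro w; conv_lhs => rw [hx w]
    simp [map_add, map_smul, hr12, hr22]
  constructor
  · intro h
    have hP1 : P e₁ = (P e₁).1 • e₁ + (P e₁).2 • e₂ := hx _
    have hP2 : P e₂ = (P e₂).1 • e₁ + (P e₂).2 • e₂ := hx _
    set a := (P e₁).1 with ha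
    set b := (P e₁).2 with hb
    set c := (P e₂).1 with hc
    set d := (P e₂).2 with hd
    have h11 := (h e₁ e₁).1
    rw [hP1] at h11
    simp only [map_add, map_smul, LinearMap.add_apply, LinearMap.smul_apply,
      hl11, hl12, hl21, hl22, smul_zero, add_zero, zero_add, zero_smul,
      smul_add, smul_smul] at h11
    rw [hP1] at h11
    have ha0 : a = 0 := by
      have h1 := congrArg Prod.fst h11
      subst he₁ he₂
      simp [Prod.ext_iff] at h1
      first | exact h1 | exact h1.symm
    have hP1' : P e₁ = b • e₂ := by rw [hP1, ha0]; simp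
    have h12 := (h e₁ e₂).2
    rw [hP1', hP2] at h12
    simp only [map_add, map_smul, LinearMap.add_apply, LinearMap.smul_apply,
      hr11, hr12, hr21, hr22, hr2w, smul_zero, add_zero, zero_add, zero_smul,
      smul_add, smul_smul] at h12
    rw [hP2] at h12
    have hd0 : d = 0 := by
      have h2 := congrArg Prod.snd h12
      subst he₁ he₂
      simp [Prod.ext_iff] at h2
      first | exact h2 | exact h2.symm
    have hP2' : P e₂ = c • e₁ := by rw [hP2, hd0]; simp
    have h22 := (h e₂ e₂).1
    rw [hP2'] at h22
    simp only [map_add, map_smul, LinearMap.add_apply, LinearMap.smul_apply,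
      hl11, hl12, hl21, hl22, smul_zero, add_zero, zero_add, zero_smul,
      smul_add, smul_smul, map_zero] at h22
    have hc0 : c = 0 := by
      subst he₁ he₂
      have h1 := congrArg Prod.fst h22
      simp [Prod.ext_iff] at h1
      first | exact h1 | exact h1.symm
    refine ⟨b, hP1', ?_⟩
    rw [hP2', hc0, zero_smul]
  · rintro ⟨t, hp1, hp2⟩ u v
    have hu : P u = (u.1 * t) • e₂ := by
      conv_lhs => rw [hx u]
      rw [map_add, map_smul, map_smul, hp1, hp2, smul_zero, add_zero, smul_smul]
    have hv : P v = (v.1 * t) • e₂ := by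
      conv_lhs => rw [hx v]
      rw [map_add, map_smul, map_smul, hp1, hp2, smul_zero, add_zero, smul_smul]
    constructor
    · rw [hu, hv]
      simp [map_smul, hl2w, hlw2]
    · rw [hu, hv]
      simp [map_smul, hr2w, hrw2, hlw2, smul_smul, hp2]
end

section
/- Let E = ℂ² with basis e₁, e₂, equipped with the dendriform algebra structure Dend₂¹ given by the bilinear operations ≺, ≻ determined on basis elements by e₁ ≺ e₁ = e₁ and e₁ ≻ e₂ = e₂ (all other products of basis elements are 0). A linear operator P : E → E is a Rota–Baxter operator of weight 1 on (E, ≺, ≻) if and only if P = 0. -/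
theorem stmt_1
    (l r : (ℂ × ℂ) →ₗ[ℂ] (ℂ × ℂ) →ₗ[ℂ] (ℂ × ℂ))
    (P : (ℂ × ℂ) →ₗ[ℂ] (ℂ × ℂ))
    (e₁ e₂ : ℂ × ℂ)
    (he₁ : e₁ = (1, 0)) (he₂ : e₂ = (0, 1))
    (hl11 : l e₁ e₁ = e₁)
    (hl12 : l e₁ e₂ = 0)
    (hl21 : l e₂ e₁ = 0)
    (hl22 : l e₂ e₂ = 0)
    (hr11 : r e₁ e₁ = 0)
    (hr12 : r e₁ e₂ = e₂)
    (hr21 : r e₂ e₁ = 0)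
    (hr22 : r e₂ e₂ = 0) :
    (∀ u v : ℂ × ℂ,
        l (P u) (P v) = P (l (P u) v + l u (P v) + (1:ℂ) • l u v) ∧
        r (P u) (P v) = P (r (P u) v + r u (P v) + (1:ℂ) • l u v)) ↔
      (P = 0) := by
  subst he₁ he₂
  constructor
  · intro h
    have hP1 : P ((1:ℂ),(0:ℂ)) = (P ((1:ℂ),(0:ℂ))).1 • ((1:ℂ),(0:ℂ)) + (P ((1:ℂ),(0:ℂ))).2 • ((0:ℂ),(1:ℂ)) := by
      ext <;> simp
    have hP2 : P ((0:ℂ),(1:ℂ)) = (P ((0:ℂ),(1:ℂ))).1 • ((1:ℂ),(0:ℂ)) + (P ((0:ℂ),(1:ℂ))).2 • ((0:ℂ),(1:ℂ)) := by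
      ext <;> simp
    set a := (P ((1:ℂ),(0:ℂ))).1 with ha'
    set b := (P ((1:ℂ),(0:ℂ))).2 with hb'
    set c := (P ((0:ℂ),(1:ℂ))).1 with hc'
    set d := (P ((0:ℂ),(1:ℂ))).2 with hd'
    obtain ⟨h11l, h11r⟩ := h (1,0) (1,0)
    obtain ⟨_, h12r⟩ := h (1,0) (0,1)
    obtain ⟨_, _⟩ := h (0,1) (1,0)
    obtain ⟨h22l, _⟩ := h (0,1) (0,1)
    rw [hP1] at h11l h11r h12r
    rw [hP2] at h12r h22l
    simp only [map_add, map_smul, LinearMap.add_apply, LinearMap.smul_apply,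
      hl11, hl12, hl21, hl22, hr11, hr12, hr21, hr22, smul_zero, add_zero, zero_add,
      smul_smul, one_smul, smul_add, map_zero] at h11l h11r h12r h22l
    simp only [hP1, hP2] at h11l h11r h12r h22l
    simp only [Prod.smul_mk, Prod.mk_add_mk, smul_eq_mul, mul_one, mul_zero, add_zero, zero_add,
      Prod.mk.injEq, Prod.mk_eq_zero] at h11l h11r h12r h22l
    -- h11l : a*a = a*a + a*a + a ∧ 0 = a*b + a*b + b
    -- h11r : 0 = b*c + a ∧ b*a = b*d + b
    -- h12r : 0 = a*c + d*c ∧ d*a = a*d + d*d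
    -- h22l : c*c = 0 ∧ 0 = 0
    have hc0 : c = 0 := by
      have := h22l.1
      exact mul_self_eq_zero.mp this
    have ha0 : a = 0 := by
      have := h11r.1
      rw [hc0] at this
      linear_combination -this
    have hb0 : b = 0 := by
      have := h11l.2
      rw [ha0] at this
      simpa using this.symm
    have hd0 : d = 0 := by
      have := h12r.2
      rw [ha0] at this
      have : d * d = 0 := by linear_combination -this
      exact mul_self_eq_zero.mp this
    have hPe1 : P ((1:ℂ),(0:ℂ)) = 0 := by rw [hP1, ha0, hb0]; simp
    have hPe2 : P ((0:ℂ),(1:ℂ)) = 0 := by rw [hP2, hc0, hd0]; simp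
    apply LinearMap.ext
    intro u
    have hu : u = u.1 • ((1:ℂ),(0:ℂ)) + u.2 • ((0:ℂ),(1:ℂ)) := by ext <;> simp
    rw [hu, map_add, map_smul, map_smul, hPe1, hPe2]
    simp
  · intro h
    subst h
    simp
end

section
/- Let E = ℂ² with basis e₁, e₂, equipped with the dendriform algebra structure Dend₂¹ given by the bilinear operations ≺, ≻ determined on basis elements by e₁ ≺ e₁ = e₁ and e₁ ≻ e₂ = e₂ (all other products of basis elements are 0). A linear operator P : E → E is a Nijenhuis operator on (E, ≺, ≻) if and only if one of the following holds: (i) there exist a, d ∈ ℂ with P(e₁) = a·e₁ and P(e₂) = d·e₂; (ii) there exist b, d ∈ ℂ with P(e₁) = d·e₁ + b·e₂ and P(e₂) = d·e₂. -/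
theorem stmt_3
    (l r : (ℂ × ℂ) →ₗ[ℂ] (ℂ × ℂ) →ₗ[ℂ] (ℂ × ℂ))
    (P : (ℂ × ℂ) →ₗ[ℂ] (ℂ × ℂ))
    (e₁ e₂ : ℂ × ℂ)
    (he₁ : e₁ = (1, 0)) (he₂ : e₂ = (0, 1))
    (hl11 : l e₁ e₁ = e₁)
    (hl12 : l e₁ e₂ = 0)
    (hl21 : l e₂ e₁ = 0)
    (hl22 : l e₂ e₂ = 0)
    (hr11 : r e₁ e₁ = 0)
    (hr12 : r e₁ e₂ = e₂)
    (hr21 : r e₂ e₁ = 0)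
    (hr22 : r e₂ e₂ = 0) :
    (∀ u v : ℂ × ℂ,
        l (P u) (P v) = P (l (P u) v + l u (P v) - P (l u v)) ∧
        r (P u) (P v) = P (r (P u) v + r u (P v) - P (r u v))) ↔
      ((∃ a d : ℂ, P e₁ = a • e₁ ∧ P e₂ = d • e₂) ∨ (∃ b d : ℂ, P e₁ = d • e₁ + b • e₂ ∧ P e₂ = d • e₂)) := by
  subst he₁ he₂
  have hdec : ∀ x y : ℂ, ((x, y) : ℂ × ℂ) = x • ((1:ℂ),(0:ℂ)) + y • ((0:ℂ),(1:ℂ)) := by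
    intro x y; simp [Prod.ext_iff]
  have hl' : ∀ u v : ℂ × ℂ, l u v = (u.1 * v.1, 0) := by
    rintro ⟨x, y⟩ ⟨z, w⟩
    conv_lhs => rw [hdec x y, hdec z w]
    simp only [map_add, map_smul, LinearMap.add_apply, LinearMap.smul_apply,
      hl11, hl12, hl21, hl22, smul_zero, add_zero, zero_add, smul_smul]
    simp [Prod.ext_iff, mul_comm]
  have hr' : ∀ u v : ℂ × ℂ, r u v = (0, u.1 * v.2) := by
    rintro ⟨x, y⟩ ⟨z, w⟩
    conv_lhs => rw [hdec x y, hdec z w]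
    simp only [map_add, map_smul, LinearMap.add_apply, LinearMap.smul_apply,
      hr11, hr12, hr21, hr22, smul_zero, add_zero, zero_add, smul_smul]
    simp [Prod.ext_iff, mul_comm]
  obtain ⟨a, b, hab⟩ : ∃ a b : ℂ, P (1, 0) = (a, b) := ⟨_, _, rfl⟩
  obtain ⟨c, d, hcd⟩ : ∃ c d : ℂ, P (0, 1) = (c, d) := ⟨_, _, rfl⟩
  have hP : ∀ u : ℂ × ℂ, P u = (u.1 * a + u.2 * c, u.1 * b + u.2 * d) := by
    rintro ⟨x, y⟩
    conv_lhs => rw [hdec x y]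
    rw [map_add, map_smul, map_smul, hab, hcd]
    simp [Prod.ext_iff, mul_comm]
  constructor
  · intro h
    have h4 := (h (0,1) (0,1)).1
    simp only [hl', hP, Prod.ext_iff, Prod.mk_add_mk, Prod.mk_sub_mk] at h4
    have hc0 : c = 0 := by
      have hcc : c * c = 0 := by linear_combination h4.1
      exact mul_self_eq_zero.mp hcc
    have h1 := (h (1,0) (1,0)).2
    simp only [hr', hP, Prod.ext_iff, Prod.mk_add_mk, Prod.mk_sub_mk] at h1
    have hbad : b * (a - d) = 0 := by linear_combination h1.2
    subst hc0
    rcases mul_eq_zero.mp hbad with hb0 | had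
    · subst hb0
      exact Or.inl ⟨a, d, by rw [hab]; simp [Prod.ext_iff],
        by rw [hcd]; simp [Prod.ext_iff]⟩
    · have had' : a = d := sub_eq_zero.mp had
      subst had'
      exact Or.inr ⟨b, a, by rw [hab]; simp [Prod.ext_iff],
        by rw [hcd]; simp [Prod.ext_iff]⟩
  · intro h
    have hkey : c = 0 ∧ b * (a - d) = 0 := by
      rcases h with ⟨a', d', h1, h2⟩ | ⟨b', d', h1, h2⟩ <;>
        rw [hab] at h1 <;> rw [hcd] at h2 <;>
        simp only [Prod.ext_iff, Prod.smul_mk, Prod.mk_add_mk, smul_eq_mul,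
          mul_one, mul_zero, add_zero, zero_add] at h1 h2
      · exact ⟨h2.1, by rw [h1.2]; ring⟩
      · exact ⟨h2.1, by rw [h1.1, h2.2]; ring⟩
    obtain ⟨hc0, hbad⟩ := hkey
    subst hc0
    intro u v
    constructor
    · simp only [hl', hP, Prod.ext_iff, Prod.mk_add_mk, Prod.mk_sub_mk,
        mul_zero, add_zero, sub_zero, zero_add, zero_mul, zero_sub]
      exact ⟨by ring, by linear_combination (-(u.1 * v.1)) * hbad⟩
    · simp only [hr', hP, Prod.ext_iff, Prod.mk_add_mk, Prod.mk_sub_mk,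
        mul_zero, add_zero, sub_zero, zero_add, zero_mul, zero_sub]
      exact ⟨trivial, by linear_combination (u.1 * v.1) * hbad⟩
end

section
/- Let E = ℂ² with basis e₁, e₂, equipped with the dendriform algebra structure Dend₂¹ given by the bilinear operations ≺, ≻ determined on basis elements by e₁ ≺ e₁ = e₁ and e₁ ≻ e₂ = e₂ (all other products of basis elements are 0). A linear operator P : E → E is an averaging operator on (E, ≺, ≻) if and only if one of the following holds for some t ∈ ℂ: (i) P(e₁) = t·e₂ and P(e₂) = 0; (ii) P(e₁) = t·e₁ and P(e₂) = 0; (iii) P(e₁) = t·e₁ and P(e₂) = t·e₂ (i.e. P = t·id). -/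
theorem stmt_4
    (l r : (ℂ × ℂ) →ₗ[ℂ] (ℂ × ℂ) →ₗ[ℂ] (ℂ × ℂ))
    (P : (ℂ × ℂ) →ₗ[ℂ] (ℂ × ℂ))
    (e₁ e₂ : ℂ × ℂ)
    (he₁ : e₁ = (1, 0)) (he₂ : e₂ = (0, 1))
    (hl11 : l e₁ e₁ = e₁)
    (hl12 : l e₁ e₂ = 0)
    (hl21 : l e₂ e₁ = 0)
    (hl22 : l e₂ e₂ = 0)
    (hr11 : r e₁ e₁ = 0)
    (hr12 : r e₁ e₂ = e₂)
    (hr21 : r e₂ e₁ = 0)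
    (hr22 : r e₂ e₂ = 0) :
    (∀ u v : ℂ × ℂ,
        l (P u) (P v) = P (l u (P v)) ∧ l (P u) (P v) = P (l (P u) v) ∧
        r (P u) (P v) = P (r u (P v)) ∧ r (P u) (P v) = P (r (P u) v)) ↔
      ((∃ t : ℂ, P e₁ = t • e₂ ∧ P e₂ = 0) ∨ (∃ t : ℂ, P e₁ = t • e₁ ∧ P e₂ = 0) ∨ (∃ t : ℂ, P e₁ = t • e₁ ∧ P e₂ = t • e₂)) := by
  have key : ∀ u : ℂ × ℂ, u = u.1 • e₁ + u.2 • e₂ := by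
    intro u
    simp [he₁, he₂, Prod.ext_iff]
  have hl : ∀ u v : ℂ × ℂ, l u v = (u.1 * v.1) • e₁ := by
    intro u v
    conv_lhs => rw [key u, key v]
    simp [hl11, hl12, hl21, hl22, smul_smul]
  have hr : ∀ u v : ℂ × ℂ, r u v = (u.1 * v.2) • e₂ := by
    intro u v
    conv_lhs => rw [key u, key v]
    simp [hr11, hr12, hr21, hr22, smul_smul]
  obtain ⟨⟨A, B⟩, hAB⟩ : ∃ p : ℂ × ℂ, P e₁ = p := ⟨_, rfl⟩
  obtain ⟨⟨C, D⟩, hCD⟩ : ∃ p : ℂ × ℂ, P e₂ = p := ⟨_, rfl⟩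
  have hPc : ∀ u : ℂ × ℂ, P u = (u.1 * A + u.2 * C, u.1 * B + u.2 * D) := by
    intro u
    conv_lhs => rw [key u]
    rw [map_add, map_smul, map_smul, hAB, hCD]
    simp [Prod.ext_iff]
  constructor
  · intro h
    have h1 := (h e₂ e₂).1
    simp only [hl, hr, hPc, he₁, he₂] at h1
    simp [Prod.ext_iff, mul_self_eq_zero] at h1
    -- h1 : C = 0
    have h3 := (h e₁ e₁).2.2.2
    simp only [hl, hr, hPc, he₁, he₂] at h3
    simp [Prod.ext_iff, h1] at h3
    -- h3 : A = 0 ∨ B = 0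
    have h2 := (h e₁ e₁).2.2.1
    simp only [hl, hr, hPc, he₁, he₂] at h2
    simp [Prod.ext_iff, h1] at h2
    -- h2 : A * B = B * D
    have h4 := (h e₁ e₂).2.2.1
    simp only [hl, hr, hPc, he₁, he₂] at h4
    simp [Prod.ext_iff, h1] at h4
    -- h4 : A = D ∨ D = 0
    by_cases hB : B = 0
    · by_cases hD : D = 0
      · right; left
        exact ⟨A, by rw [hAB, he₁]; simp [Prod.ext_iff, hB],
               by rw [hCD]; simp [Prod.ext_iff, h1, hD]⟩
      · right; right
        have hAD : A = D := h4.resolve_right hD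
        exact ⟨A, by rw [hAB, he₁]; simp [Prod.ext_iff, hB],
               by rw [hCD, he₂]; simp [Prod.ext_iff, h1, hAD]⟩
    · have hA : A = 0 := h3.resolve_right hB
      have hD : D = 0 := by
        have : B * D = 0 := by rw [← h2, hA, zero_mul]
        exact (mul_eq_zero.mp this).resolve_left hB
      left
      exact ⟨B, by rw [hAB, he₂]; simp [Prod.ext_iff, hA],
             by rw [hCD]; simp [Prod.ext_iff, h1, hD]⟩
  · intro h
    rcases h with ⟨t, h1, h2⟩ | ⟨t, h1, h2⟩ | ⟨t, h1, h2⟩ <;>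
    · rw [hAB] at h1
      rw [hCD] at h2
      simp [he₁, he₂, Prod.ext_iff] at h1 h2
      obtain ⟨hA, hB⟩ := h1
      obtain ⟨hC, hD⟩ := h2
      subst hA hB hC hD
      intro u v
      refine ⟨?_, ?_, ?_, ?_⟩ <;>
      · simp only [hl, hr, hPc, he₁, he₂]
        simp [Prod.ext_iff]
        try constructor
        all_goals ring
end

section
/- Fix α ∈ ℂ. Let E = ℂ² with basis e₁, e₂, equipped with the dendriform algebra structure Dend₂²(α) given by the bilinear operations ≺, ≻ determined on basis elements by e₁ ≺ e₁ = e₂ and e₁ ≻ e₁ = α·e₂ (all other products of basis elements are 0). A linear operator P : E → E is a Rota–Baxter operator of weight 0 on (E, ≺, ≻) if and only if there exist b, d ∈ ℂ such that either (i) P(e₁) = b·e₂ and P(e₂) = d·e₂, or (ii) P(e₁) = 2d·e₁ + b·e₂ and P(e₂) = d·e₂. -/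
theorem stmt_5
    (α : ℂ)
    (l r : (ℂ × ℂ) →ₗ[ℂ] (ℂ × ℂ) →ₗ[ℂ] (ℂ × ℂ))
    (P : (ℂ × ℂ) →ₗ[ℂ] (ℂ × ℂ))
    (e₁ e₂ : ℂ × ℂ)
    (he₁ : e₁ = (1, 0)) (he₂ : e₂ = (0, 1))
    (hl11 : l e₁ e₁ = e₂)
    (hl12 : l e₁ e₂ = 0)
    (hl21 : l e₂ e₁ = 0)
    (hl22 : l e₂ e₂ = 0)
    (hr11 : r e₁ e₁ = α • e₂)
    (hr12 : r e₁ e₂ = 0)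
    (hr21 : r e₂ e₁ = 0)
    (hr22 : r e₂ e₂ = 0) :
    (∀ u v : ℂ × ℂ,
        l (P u) (P v) = P (l (P u) v + l u (P v) + (0:ℂ) • l u v) ∧
        r (P u) (P v) = P (r (P u) v + r u (P v) + (0:ℂ) • l u v)) ↔
      (∃ b d : ℂ, (P e₁ = b • e₂ ∧ P e₂ = d • e₂) ∨ (P e₁ = (2 * d) • e₁ + b • e₂ ∧ P e₂ = d • e₂)) := by
  subst he₁ he₂
  have hdec : ∀ u : ℂ × ℂ, u = u.1 • ((1:ℂ), (0:ℂ)) + u.2 • ((0:ℂ), (1:ℂ)) := by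
    intro u; ext <;> simp
  have hl' : ∀ u v : ℂ × ℂ, l u v = (u.1 * v.1) • ((0:ℂ), (1:ℂ)) := by
    intro u v
    conv_lhs => rw [hdec u, hdec v]
    simp only [map_add, map_smul, LinearMap.add_apply, LinearMap.smul_apply,
      hl11, hl12, hl21, hl22, smul_zero, add_zero, smul_smul]
    ext <;> simp <;> ring
  have hr' : ∀ u v : ℂ × ℂ, r u v = (α * (u.1 * v.1)) • ((0:ℂ), (1:ℂ)) := by
    intro u v
    conv_lhs => rw [hdec u, hdec v]
    simp only [map_add, map_smul, LinearMap.add_apply, LinearMap.smul_apply,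
      hr11, hr12, hr21, hr22, smul_zero, add_zero, smul_smul]
    ext <;> simp <;> ring
  have hP : ∀ u : ℂ × ℂ, P u = u.1 • P ((1:ℂ),(0:ℂ)) + u.2 • P ((0:ℂ),(1:ℂ)) := by
    intro u
    conv_lhs => rw [hdec u]
    simp only [map_add, map_smul]
  constructor
  · intro h
    have key : ∀ u v : ℂ × ℂ, ((P u).1 * (P v).1) • ((0:ℂ),(1:ℂ))
        = ((P u).1 * v.1 + u.1 * (P v).1) • P ((0:ℂ),(1:ℂ)) := by
      intro u v
      have h1 := (h u v).1
      simp only [hl'] at h1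
      rw [show ((P u).1 * v.1) • ((0:ℂ),(1:ℂ)) + (u.1 * (P v).1) • ((0:ℂ),(1:ℂ))
            + (0:ℂ) • ((u.1 * v.1) • ((0:ℂ),(1:ℂ)))
          = ((P u).1 * v.1 + u.1 * (P v).1) • ((0:ℂ),(1:ℂ)) from by
            ext <;> simp, map_smul] at h1
      exact h1
    have hc : (P ((0:ℂ),(1:ℂ))).1 = 0 := by
      have k := congrArg Prod.fst (key (1,0) (0,1))
      simpa using k
    have k2 := congrArg Prod.snd (key (1,0) (1,0))
    simp at k2
    by_cases ha : (P ((1:ℂ),(0:ℂ))).1 = 0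
    · exact ⟨(P ((1:ℂ),(0:ℂ))).2, (P ((0:ℂ),(1:ℂ))).2, Or.inl
        ⟨by ext <;> simp [ha], by ext <;> simp [hc]⟩⟩
    · refine ⟨(P ((1:ℂ),(0:ℂ))).2, (P ((0:ℂ),(1:ℂ))).2, Or.inr
        ⟨?_, by ext <;> simp [hc]⟩⟩
      have had : (P ((1:ℂ),(0:ℂ))).1 = 2 * (P ((0:ℂ),(1:ℂ))).2 :=
        mul_left_cancel₀ ha (by linear_combination k2)
      ext <;> simp [had]
  · rintro ⟨b, d, hcase⟩
    obtain ⟨A, hA, hP1, hP2⟩ : ∃ A : ℂ, A * A = 2 * A * d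
        ∧ P ((1:ℂ),(0:ℂ)) = (A, b) ∧ P ((0:ℂ),(1:ℂ)) = ((0:ℂ), d) := by
      rcases hcase with ⟨h1, h2⟩ | ⟨h1, h2⟩
      · exact ⟨0, by ring, by rw [h1]; ext <;> simp, by rw [h2]; ext <;> simp⟩
      · exact ⟨2*d, by ring, by rw [h1]; ext <;> simp, by rw [h2]; ext <;> simp⟩
    have hPu1 : ∀ w : ℂ × ℂ, (P w).1 = w.1 * A := by
      intro w; rw [hP w, hP1, hP2]; simp [mul_comm]
    intro u v
    constructor
    · simp only [hl', map_add, map_smul, smul_smul, hP2, hPu1, zero_smul, smul_zero, add_zero]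
      ext
      · simp
      · simp only [Prod.smul_snd, Prod.snd_add, smul_eq_mul, Prod.mk.injEq]
        ring_nf
        linear_combination u.1 * v.1 * hA
    · simp only [hl', hr', map_add, map_smul, smul_smul, hP2, hPu1, zero_smul, smul_zero, add_zero]
      ext
      · simp
      · simp only [Prod.smul_snd, Prod.snd_add, smul_eq_mul, Prod.mk.injEq]
        ring_nf
        linear_combination α * u.1 * v.1 * hA
end

section
/- Let E = ℂ² with basis e₁, e₂, equipped with the dendriform algebra structure Dend₂⁷ given by the bilinear operations ≺, ≻ determined on basis elements by e₁ ≺ e₂ = −e₂, e₂ ≺ e₂ = e₂, e₁ ≻ e₁ = e₁, e₁ ≻ e₂ = e₂ (all other products of basis elements are 0). A linear operator P : E → E is a Rota–Baxter operator of weight 1 on (E, ≺, ≻) if and only if P = 0. -/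
theorem stmt_13
    (l r : (ℂ × ℂ) →ₗ[ℂ] (ℂ × ℂ) →ₗ[ℂ] (ℂ × ℂ))
    (P : (ℂ × ℂ) →ₗ[ℂ] (ℂ × ℂ))
    (e₁ e₂ : ℂ × ℂ)
    (he₁ : e₁ = (1, 0)) (he₂ : e₂ = (0, 1))
    (hl11 : l e₁ e₁ = 0)
    (hl12 : l e₁ e₂ = -e₂)
    (hl21 : l e₂ e₁ = 0)
    (hl22 : l e₂ e₂ = e₂)
    (hr11 : r e₁ e₁ = e₁)
    (hr12 : r e₁ e₂ = e₂)
    (hr21 : r e₂ e₁ = 0)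
    (hr22 : r e₂ e₂ = 0) :
    (∀ u v : ℂ × ℂ,
        l (P u) (P v) = P (l (P u) v + l u (P v) + (1:ℂ) • l u v) ∧
        r (P u) (P v) = P (r (P u) v + r u (P v) + (1:ℂ) • l u v)) ↔
      (P = 0) := by
  have hbasis : ∀ w : ℂ × ℂ, w = w.1 • e₁ + w.2 • e₂ := by
    intro w
    subst he₁ he₂
    ext <;> simp
  constructor
  · intro h
    set a := (P e₁).1 with ha'
    set b := (P e₁).2 with hb'
    set c := (P e₂).1 with hc'
    set d := (P e₂).2 with hd'
    have hPe1 : P e₁ = a • e₁ + b • e₂ := hbasis (P e₁)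
    have hPe2 : P e₂ = c • e₁ + d • e₂ := hbasis (P e₂)
    -- equation from r at (e₂, e₂)
    have h22 := (h e₂ e₂).2
    rw [hPe2] at h22
    simp only [map_add, map_smul, LinearMap.add_apply, LinearMap.smul_apply,
      hl22, hr11, hr21, hr22, hr12, one_smul, smul_zero, add_zero, zero_add,
      smul_add, smul_smul, hPe1, hPe2] at h22
    rw [he₁, he₂] at h22
    simp only [Prod.smul_mk, Prod.mk_add_mk, smul_eq_mul, mul_one, mul_zero,
      add_zero, zero_add, Prod.mk.injEq] at h22
    obtain ⟨h22a, h22b⟩ := h22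
    have hc0 : c = 0 := by linear_combination -h22a
    have hd0 : d = 0 := by linear_combination -h22b
    -- equation from r at (e₁, e₁)
    have h11 := h e₁ e₁
    obtain ⟨h11L, h11R⟩ := h11
    rw [hPe1] at h11L h11R
    simp only [map_add, map_smul, LinearMap.add_apply, LinearMap.smul_apply,
      hl11, hl12, hl21, hl22, hr11, hr12, hr21, hr22, one_smul, smul_zero,
      add_zero, zero_add, smul_add, smul_smul, smul_neg, map_neg, neg_smul, neg_neg, neg_add, hPe1, hPe2] at h11L h11R
    simp only [he₁, he₂] at h11L h11R
    simp only [Prod.smul_mk, Prod.mk_add_mk, Prod.neg_mk, smul_eq_mul, mul_one,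
      mul_zero, add_zero, zero_add, neg_zero, Prod.mk.injEq, mul_neg] at h11L h11R
    obtain ⟨hRa, hRb⟩ := h11R
    obtain ⟨hLa, hLb⟩ := h11L
    have ha0 : a = 0 := by
      have hsq : a ^ 2 = 0 := by linear_combination -hRa - b * hc0
      exact pow_eq_zero_iff (two_ne_zero) |>.mp hsq
    have hb0 : b = 0 := by
      have hsq : b ^ 2 = 0 := by
        linear_combination hLb + b * ha0 - b * hd0
      exact pow_eq_zero_iff (two_ne_zero) |>.mp hsq
    have hP1 : P e₁ = 0 := by rw [hPe1, ha0, hb0]; simp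
    have hP2 : P e₂ = 0 := by rw [hPe2, hc0, hd0]; simp
    apply LinearMap.ext
    intro w
    rw [hbasis w, map_add, map_smul, map_smul, hP1, hP2]; simp
  · intro hP
    subst hP
    intro u v
    simp
end

section
/- Fix α ∈ ℂ. Let E = ℂ² with basis e₁, e₂, equipped with the dendriform algebra structure Dend₂²(α) given by the bilinear operations ≺, ≻ determined on basis elements by e₁ ≺ e₁ = e₂ and e₁ ≻ e₁ = α·e₂ (all other products of basis elements are 0). A linear operator P : E → E is a Nijenhuis operator on (E, ≺, ≻) if and only if there exist b, d ∈ ℂ such that P(e₁) = d·e₁ + b·e₂ and P(e₂) = d·e₂. -/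
theorem stmt_15
    (α : ℂ)
    (l r : (ℂ × ℂ) →ₗ[ℂ] (ℂ × ℂ) →ₗ[ℂ] (ℂ × ℂ))
    (P : (ℂ × ℂ) →ₗ[ℂ] (ℂ × ℂ))
    (e₁ e₂ : ℂ × ℂ)
    (he₁ : e₁ = (1, 0)) (he₂ : e₂ = (0, 1))
    (hl11 : l e₁ e₁ = e₂)
    (hl12 : l e₁ e₂ = 0)
    (hl21 : l e₂ e₁ = 0)
    (hl22 : l e₂ e₂ = 0)
    (hr11 : r e₁ e₁ = α • e₂)
    (hr12 : r e₁ e₂ = 0)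
    (hr21 : r e₂ e₁ = 0)
    (hr22 : r e₂ e₂ = 0) :
    (∀ u v : ℂ × ℂ,
        l (P u) (P v) = P (l (P u) v + l u (P v) - P (l u v)) ∧
        r (P u) (P v) = P (r (P u) v + r u (P v) - P (r u v))) ↔
      (∃ b d : ℂ, P e₁ = d • e₁ + b • e₂ ∧ P e₂ = d • e₂) := by
  subst he₁ he₂
  have hu : ∀ u : ℂ × ℂ, u = u.1 • ((1:ℂ),(0:ℂ)) + u.2 • ((0:ℂ),(1:ℂ)) := by
    intro u; ext <;> simp
  have hl : ∀ u v : ℂ × ℂ, l u v = (u.1 * v.1) • ((0:ℂ),(1:ℂ)) := by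
    intro u v
    conv_lhs => rw [hu u, hu v]
    simp only [map_add, map_smul, LinearMap.add_apply, LinearMap.smul_apply,
      hl11, hl12, hl21, hl22, smul_smul, smul_zero, add_zero, zero_add]
    module
  have hr' : ∀ u v : ℂ × ℂ, r u v = (u.1 * v.1 * α) • ((0:ℂ),(1:ℂ)) := by
    intro u v
    conv_lhs => rw [hu u, hu v]
    simp only [map_add, map_smul, LinearMap.add_apply, LinearMap.smul_apply,
      hr11, hr12, hr21, hr22, smul_smul, smul_zero, add_zero, zero_add]
    module
  constructor
  · intro h
    set p := (P ((1:ℂ),(0:ℂ))).1 with hp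
    set q := (P ((1:ℂ),(0:ℂ))).2 with hq
    set s := (P ((0:ℂ),(1:ℂ))).1 with hs
    set t := (P ((0:ℂ),(1:ℂ))).2 with ht
    have hPu : ∀ u : ℂ × ℂ, P u = (u.1*p+u.2*s, u.1*q+u.2*t) := by
      intro u
      conv_lhs => rw [hu u]
      simp only [map_add, map_smul]
      ext <;> simp [mul_comm] <;> rfl
    have k1 := (h (1,0) (0,1)).1
    simp only [hl, hPu, map_smul] at k1
    have k1a := congrArg Prod.fst k1
    simp at k1a
    have hs0 : s = 0 := k1a
    have k2 := (h (1,0) (1,0)).1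
    simp only [hl, hPu, map_smul] at k2
    have k2b := congrArg Prod.snd k2
    simp [hs0] at k2b
    have hpt : p = t := by
      have h0 : (p - t) * (p - t) = 0 := by linear_combination k2b
      have := mul_self_eq_zero.mp h0
      linear_combination this
    refine ⟨q, p, ?_, ?_⟩
    · rw [hPu]; ext <;> simp
    · rw [hPu]; ext <;> simp [hs0, hpt]
  · rintro ⟨b, d, h1, h2⟩
    have hPu : ∀ u : ℂ × ℂ, P u = (u.1*d, u.1*b+u.2*d) := by
      intro u
      conv_lhs => rw [hu u]
      simp only [map_add, map_smul, h1, h2]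
      ext <;> simp <;> ring
    intro u v
    constructor <;>
      simp only [hl, hr', hPu, map_smul] <;>
      refine Prod.ext ?_ ?_ <;> simp [mul_comm, mul_assoc, mul_left_comm]
end

section
/- Let E = ℂ² with basis e₁, e₂, equipped with the dendriform algebra structure Dend₂³ given by the bilinear operations ≺, ≻ determined on basis elements by e₁ ≺ e₁ = e₁, e₂ ≺ e₁ = e₂, e₁ ≻ e₂ = e₂, e₂ ≻ e₁ = −e₂ (all other products of basis elements are 0). Then every linear operator P : E → E is a Nijenhuis operator on (E, ≺, ≻). -/
theorem stmt_16
    (l r : (ℂ × ℂ) →ₗ[ℂ] (ℂ × ℂ) →ₗ[ℂ] (ℂ × ℂ))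
    (P : (ℂ × ℂ) →ₗ[ℂ] (ℂ × ℂ))
    (e₁ e₂ : ℂ × ℂ)
    (he₁ : e₁ = (1, 0)) (he₂ : e₂ = (0, 1))
    (hl11 : l e₁ e₁ = e₁)
    (hl12 : l e₁ e₂ = 0)
    (hl21 : l e₂ e₁ = e₂)
    (hl22 : l e₂ e₂ = 0)
    (hr11 : r e₁ e₁ = 0)
    (hr12 : r e₁ e₂ = e₂)
    (hr21 : r e₂ e₁ = -e₂)
    (hr22 : r e₂ e₂ = 0) :
    ∀ u v : ℂ × ℂ,
        l (P u) (P v) = P (l (P u) v + l u (P v) - P (l u v)) ∧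
        r (P u) (P v) = P (r (P u) v + r u (P v) - P (r u v)) := by
  have hx : ∀ x : ℂ × ℂ, x = x.1 • e₁ + x.2 • e₂ := by
    intro x
    simp [he₁, he₂, Prod.ext_iff]
  have hl : ∀ x y : ℂ × ℂ, l x y = (x.1 * y.1) • e₁ + (x.2 * y.1) • e₂ := by
    intro x y
    conv_lhs => rw [hx x, hx y]
    simp [hl11, hl12, hl21, hl22, smul_smul]
  have hr : ∀ x y : ℂ × ℂ, r x y = (x.1 * y.2 - x.2 * y.1) • e₂ := by
    intro x y
    conv_lhs => rw [hx x, hx y]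
    simp [hr11, hr12, hr21, hr22, smul_smul, sub_smul]
    module
  obtain ⟨p, hp⟩ : ∃ p, P e₁ = p := ⟨_, rfl⟩
  obtain ⟨q, hq⟩ : ∃ q, P e₂ = q := ⟨_, rfl⟩
  have hP : ∀ x : ℂ × ℂ, P x = x.1 • p + x.2 • q := by
    intro x
    conv_lhs => rw [hx x]
    simp [hp, hq]
  intro u v
  constructor <;>
    simp only [hl, hr, hP, he₁, he₂, Prod.smul_mk, Prod.mk_add_mk, smul_eq_mul,
      Prod.ext_iff, Prod.fst_add, Prod.snd_add, Prod.smul_fst, Prod.smul_snd,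
      Prod.fst_sub, Prod.snd_sub] <;>
    constructor <;> ring
end

section
/- Let E = ℂ² with basis e₁, e₂, equipped with the dendriform algebra structure Dend₂⁸ given by the bilinear operations ≺, ≻ determined on basis elements by e₁ ≺ e₁ = e₁ + e₂, e₁ ≺ e₂ = −e₂, e₂ ≺ e₂ = e₂, e₁ ≻ e₁ = −e₂, e₁ ≻ e₂ = e₂ (all other products of basis elements are 0). A linear operator P : E → E is a Nijenhuis operator on (E, ≺, ≻) if and only if there exist b, d ∈ ℂ such that P(e₁) = (b + d)·e₁ + b·e₂ and P(e₂) = d·e₂. -/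
theorem stmt_17
    (l r : (ℂ × ℂ) →ₗ[ℂ] (ℂ × ℂ) →ₗ[ℂ] (ℂ × ℂ))
    (P : (ℂ × ℂ) →ₗ[ℂ] (ℂ × ℂ))
    (e₁ e₂ : ℂ × ℂ)
    (he₁ : e₁ = (1, 0)) (he₂ : e₂ = (0, 1))
    (hl11 : l e₁ e₁ = e₁ + e₂)
    (hl12 : l e₁ e₂ = -e₂)
    (hl21 : l e₂ e₁ = 0)
    (hl22 : l e₂ e₂ = e₂)
    (hr11 : r e₁ e₁ = -e₂)
    (hr12 : r e₁ e₂ = e₂)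
    (hr21 : r e₂ e₁ = 0)
    (hr22 : r e₂ e₂ = 0) :
    (∀ u v : ℂ × ℂ,
        l (P u) (P v) = P (l (P u) v + l u (P v) - P (l u v)) ∧
        r (P u) (P v) = P (r (P u) v + r u (P v) - P (r u v))) ↔
      (∃ b d : ℂ, P e₁ = (b + d) • e₁ + b • e₂ ∧ P e₂ = d • e₂) := by
  subst he₁ he₂
  have hdec : ∀ x : ℂ × ℂ, x = x.1 • ((1:ℂ),(0:ℂ)) + x.2 • ((0:ℂ),(1:ℂ)) := by
    intro x; ext <;> simp
  set a : ℂ := (P (1,0)).1 with ha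
  set b : ℂ := (P (1,0)).2 with hb
  set c : ℂ := (P (0,1)).1 with hc
  set d : ℂ := (P (0,1)).2 with hd
  have hPf : ∀ x : ℂ × ℂ, P x = (x.1*a + x.2*c, x.1*b + x.2*d) := by
    intro x
    conv_lhs => rw [hdec x]
    simp only [map_add, map_smul, Prod.ext_iff, Prod.fst_add, Prod.snd_add,
      Prod.smul_fst, Prod.smul_snd, smul_eq_mul, ← ha, ← hb, ← hc, ← hd]
    constructor <;> trivial
  have hlf : ∀ u v : ℂ × ℂ, l u v = (u.1*v.1, u.1*v.1 - u.1*v.2 + u.2*v.2) := by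
    intro u v
    conv_lhs => rw [hdec u, hdec v]
    simp only [map_add, map_smul, LinearMap.add_apply, LinearMap.smul_apply,
      hl11, hl12, hl21, hl22, Prod.ext_iff, Prod.fst_add, Prod.snd_add,
      Prod.smul_fst, Prod.smul_snd, Prod.fst_neg, Prod.snd_neg, Prod.fst_zero, Prod.snd_zero,
      smul_eq_mul]
    constructor <;> ring
  have hrf : ∀ u v : ℂ × ℂ, r u v = ((0:ℂ), -(u.1*v.1) + u.1*v.2) := by
    intro u v
    conv_lhs => rw [hdec u, hdec v]
    simp only [map_add, map_smul, LinearMap.add_apply, LinearMap.smul_apply,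
      hr11, hr12, hr21, hr22, Prod.ext_iff, Prod.fst_add, Prod.snd_add,
      Prod.smul_fst, Prod.smul_snd, Prod.fst_neg, Prod.snd_neg, Prod.fst_zero, Prod.snd_zero,
      smul_eq_mul]
    constructor <;> ring
  constructor
  · intro h
    have h1 := (h (1,0) (0,1)).2
    have h2 := (h (1,0) (1,0)).1
    simp only [hlf, hrf, hPf, Prod.ext_iff, Prod.fst_add, Prod.snd_add, Prod.fst_sub,
      Prod.snd_sub] at h1 h2
    have hcc : c * c = 0 := by linear_combination h1.1
    have hc0 : c = 0 := mul_self_eq_zero.mp hcc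
    have habd : (a - b - d) * (a - b - d) = 0 := by linear_combination h2.2 - b * hc0
    have ha0 : a = b + d := by
      have := mul_self_eq_zero.mp habd
      linear_combination this
    refine ⟨b, d, ?_, ?_⟩
    · rw [hPf]
      simp only [Prod.ext_iff, Prod.fst_add, Prod.snd_add, Prod.smul_fst, Prod.smul_snd,
        smul_eq_mul]
      constructor
      · linear_combination ha0
      · ring
    · rw [hPf]
      simp only [Prod.ext_iff, Prod.fst_add, Prod.snd_add, Prod.smul_fst, Prod.smul_snd,
        smul_eq_mul]
      constructor
      · linear_combination hc0
      · ring
  · rintro ⟨b', d', h1, h2⟩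
    rw [hPf] at h1 h2
    simp only [Prod.ext_iff, Prod.fst_add, Prod.snd_add, Prod.smul_fst, Prod.smul_snd,
      smul_eq_mul, one_mul, zero_mul, mul_one, mul_zero, add_zero, zero_add] at h1 h2
    obtain ⟨ha', hb'⟩ := h1
    obtain ⟨hc', hd'⟩ := h2
    have hPf' : ∀ x : ℂ × ℂ, P x = (x.1 * (b' + d'), x.1 * b' + x.2 * d') := by
      intro x
      rw [hPf x, ha', hb', hc', hd']
      simp [Prod.ext_iff]
    intro u v
    constructor
    · simp only [hlf, hrf, hPf', Prod.ext_iff, Prod.fst_add, Prod.snd_add, Prod.fst_sub,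
        Prod.snd_sub]
      constructor <;> ring
    · simp only [hlf, hrf, hPf', Prod.ext_iff, Prod.fst_add, Prod.snd_add, Prod.fst_sub,
        Prod.snd_sub]
      constructor <;> ring
end

section
/- Let E = ℂ² with basis e₁, e₂, equipped with the dendriform algebra structure Dend₂⁶ given by the bilinear operations ≺, ≻ determined on basis elements by e₁ ≺ e₁ = e₁ and e₂ ≻ e₂ = e₂ (all other products of basis elements are 0). A linear operator P : E → E is an averaging operator on (E, ≺, ≻) if and only if there exist a, d ∈ ℂ such that P(e₁) = a·e₁ and P(e₂) = d·e₂. -/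
theorem stmt_18
    (l r : (ℂ × ℂ) →ₗ[ℂ] (ℂ × ℂ) →ₗ[ℂ] (ℂ × ℂ))
    (P : (ℂ × ℂ) →ₗ[ℂ] (ℂ × ℂ))
    (e₁ e₂ : ℂ × ℂ)
    (he₁ : e₁ = (1, 0)) (he₂ : e₂ = (0, 1))
    (hl11 : l e₁ e₁ = e₁)
    (hl12 : l e₁ e₂ = 0)
    (hl21 : l e₂ e₁ = 0)
    (hl22 : l e₂ e₂ = 0)
    (hr11 : r e₁ e₁ = 0)
    (hr12 : r e₁ e₂ = 0)
    (hr21 : r e₂ e₁ = 0)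
    (hr22 : r e₂ e₂ = e₂) :
    (∀ u v : ℂ × ℂ,
        l (P u) (P v) = P (l u (P v)) ∧ l (P u) (P v) = P (l (P u) v) ∧
        r (P u) (P v) = P (r u (P v)) ∧ r (P u) (P v) = P (r (P u) v)) ↔
      (∃ a d : ℂ, P e₁ = a • e₁ ∧ P e₂ = d • e₂) := by
  subst he₁ he₂
  have hdec : ∀ x : ℂ × ℂ, x = x.1 • ((1:ℂ), (0:ℂ)) + x.2 • ((0:ℂ), (1:ℂ)) := by
    intro x; ext <;> simp
  have hl : ∀ x y : ℂ × ℂ, l x y = (x.1 * y.1, 0) := by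
    intro x y
    conv_lhs => rw [hdec x, hdec y]
    simp only [map_add, map_smul, LinearMap.add_apply, LinearMap.smul_apply,
      hl11, hl12, hl21, hl22, smul_zero]
    ext <;> simp [mul_comm]
  have hr : ∀ x y : ℂ × ℂ, r x y = (0, x.2 * y.2) := by
    intro x y
    conv_lhs => rw [hdec x, hdec y]
    simp only [map_add, map_smul, LinearMap.add_apply, LinearMap.smul_apply,
      hr11, hr12, hr21, hr22, smul_zero]
    ext <;> simp [mul_comm]
  constructor
  · intro h
    refine ⟨(P (1, 0)).1, (P (0, 1)).2, ?_, ?_⟩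
    · have h1 := (h (1, 0) (1, 0)).2.2.1
      rw [hr, hr] at h1
      simp at h1
      rw [Prod.mk_zero_zero, map_zero] at h1
      simp at h1
      ext <;> simp [h1]
    · have h1 := (h (0, 1) (0, 1)).1
      rw [hl, hl] at h1
      simp at h1
      rw [Prod.mk_zero_zero, map_zero] at h1
      simp at h1
      ext <;> simp [h1]
  · rintro ⟨a, d, h1, h2⟩ u v
    have hP : ∀ x : ℂ × ℂ, P x = (a * x.1, d * x.2) := by
      intro x
      conv_lhs => rw [hdec x]
      simp only [map_add, map_smul, h1, h2]
      ext <;> simp [mul_comm]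
    refine ⟨?_, ?_, ?_, ?_⟩ <;> simp [hl, hr, hP, Prod.ext_iff] <;> ring
end
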